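/- Let r ≥ 1 and n ≥ 3r with n ≡ r (mod 2). The connected graph C(n,r) = K₃ * ((r−1)K₃ ⊎ ((n−3r)/2)K₂) has exactly 3^{r−1}·2^{(n−3r+2)/2} + 2^{r−1} maximal independent sets. -/

import Mathlib

attribute [local instance] Classical.propDecidable

/-- `s` is an independent set of vertices of `G`. -/
def IsIndep {V : Type*} (G : SimpleGraph V) (s : Finset V) : Prop :=
  ∀ u ∈ s, ∀ v ∈ s, ¬ G.Adj u v

/-- `s` is a maximal independent set of vertices of `G`. -/
def IsMaxlIndep {V : Type*} (G : SimpleGraph V) (s : Finset V) : Prop :=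
  IsIndep G s ∧ ∀ t : Finset V, IsIndep G t → s ⊆ t → s = t

/-- `m(G)`: the number of maximal independent sets of `G`. -/
noncomputable def numMaxlIndep {V : Type*} [Fintype V] (G : SimpleGraph V) : ℕ :=
  Set.ncard {s : Finset V | IsMaxlIndep G s}

/-- Component label for `C(n,r)`: vertices `0,1,2` form the central triangle,
vertices `3,…,3r-1` form `r-1` triangles, and vertices `3r,…,n-1` form
`(n-3r)/2` disjoint edges. -/
def CnrLabel (r i : ℕ) : ℕ :=
  if i < 3 then 0 else if i < 3 * r then 1 + (i - 3) / 3 else r + (i - 3 * r) / 2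

/-- `i` is the vertex of its component joined to the distinguished vertex
`v₀ = 0` of the central triangle. -/
def CnrAnchor (r i : ℕ) : Prop :=
  (3 ≤ i ∧ i < 3 * r ∧ i % 3 = 0) ∨ (3 * r ≤ i ∧ (i - 3 * r) % 2 = 0)

/-- The graph `C(n,r) = K₃ * ((r-1)K₃ ⊎ ((n-3r)/2)K₂)` on `Fin n`. -/
def Cnr (n r : ℕ) : SimpleGraph (Fin n) where
  Adj a b := a ≠ b ∧
    (CnrLabel r (a : ℕ) = CnrLabel r (b : ℕ) ∨
      ((a : ℕ) = 0 ∧ CnrAnchor r (b : ℕ)) ∨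
      ((b : ℕ) = 0 ∧ CnrAnchor r (a : ℕ)))
  symm := by
    constructor
    rintro a b ⟨h1, h2 | h2 | h2⟩
    · exact ⟨h1.symm, Or.inl h2.symm⟩
    · exact ⟨h1.symm, Or.inr (Or.inr h2)⟩
    · exact ⟨h1.symm, Or.inr (Or.inl h2)⟩
  loopless := by constructor; rintro a ⟨h1, _⟩; exact h1 rfl

lemma label_low' {r v : ℕ} (h : v < 3) : CnrLabel r v = 0 := by
  unfold CnrLabel; rw [if_pos h]

lemma label_mid' {r v c : ℕ} (h1 : 3*c ≤ v) (h2 : v < 3*c+3) (h3 : 1 ≤ c) (h4 : c < r) :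
    CnrLabel r v = c := by
  unfold CnrLabel; rw [if_neg (by omega), if_pos (by omega)]; omega

lemma label_hi' {r v c : ℕ} (h0 : 1 ≤ r) (h1 : r ≤ c) (h2 : 3*r+2*(c-r) ≤ v)
    (h3 : v < 3*r+2*(c-r)+2) : CnrLabel r v = c := by
  unfold CnrLabel; rw [if_neg (by omega), if_neg (by omega)]; omega

lemma label_cases {r k v : ℕ} (hr : 1 ≤ r) (hv : v < 3*r+2*k) :
    (v < 3 ∧ CnrLabel r v = 0) ∨
    (∃ i o, i < r-1 ∧ o < 3 ∧ v = 3*(1+i)+o ∧ CnrLabel r v = 1+i) ∨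
    (∃ j o, j < k ∧ o < 2 ∧ v = 3*r+2*j+o ∧ CnrLabel r v = r+j) := by
  by_cases h3 : v < 3
  · exact Or.inl ⟨h3, label_low' h3⟩
  by_cases h3r : v < 3*r
  · exact Or.inr (Or.inl ⟨(v-3)/3, (v-3)%3, by omega, by omega, by omega,
      label_mid' (c := 1+(v-3)/3) (by omega) (by omega) (by omega) (by omega)⟩)
  · exact Or.inr (Or.inr ⟨(v-3*r)/2, (v-3*r)%2, by omega, by omega, by omega,
      label_hi' (c := r+(v-3*r)/2) hr (by omega) (by omega) (by omega)⟩)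

lemma label_lt {r k : ℕ} (hr : 1 ≤ r) {v : ℕ} (hv : v < 3*r+2*k) : CnrLabel r v < r+k := by
  rcases label_cases (k := k) hr hv with ⟨_,h⟩|⟨i,o,hi,_,_,h⟩|⟨j,o,hj,_,_,h⟩ <;> omega

lemma anchor_low {r v : ℕ} (hr : 1 ≤ r) (h : v < 3) : ¬ CnrAnchor r v := by
  unfold CnrAnchor; omega

lemma adj_iff {n r : ℕ} {a b : Fin n} : (Cnr n r).Adj a b ↔ (a ≠ b ∧
    (CnrLabel r (a : ℕ) = CnrLabel r (b : ℕ) ∨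
      ((a : ℕ) = 0 ∧ CnrAnchor r (b : ℕ)) ∨
      ((b : ℕ) = 0 ∧ CnrAnchor r (a : ℕ)))) := Iff.rfl

/-- abstract characterization of maximal independent sets of `Cnr`. -/
def Good (n r k : ℕ) (s : Finset (Fin n)) : Prop :=
  (∀ c, c < r + k → ∃! v : Fin n, v ∈ s ∧ CnrLabel r (v:ℕ) = c) ∧
  (∀ v ∈ s, (v:ℕ) = 0 → ∀ w ∈ s, ¬ CnrAnchor r (w:ℕ))

lemma maxl_iff_good {n r k : ℕ} (hr : 1 ≤ r) (hn : n = 3*r+2*k) (s : Finset (Fin n)) :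
    IsMaxlIndep (Cnr n r) s ↔ Good n r k s := by
  constructor
  · rintro ⟨hind, hmax⟩
    have hnot : ∀ c, c < r+k → (∀ v ∈ s, CnrLabel r (v:ℕ) ≠ c) → False := by
      intro c hc hno
      have hcp : (if c = 0 then 1 else if c < r then 3*c+1 else 3*r+2*(c-r)+1) < n := by
        split_ifs <;> omega
      set f : Fin n := ⟨_, hcp⟩ with hf
      have hfl : CnrLabel r (f:ℕ) = c := by
        show CnrLabel r (if c = 0 then 1 else if c < r then 3*c+1 else 3*r+2*(c-r)+1) = c
        unfold CnrLabel; split_ifs <;> omega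
      have hfa : ¬ CnrAnchor r (f:ℕ) := by
        show ¬ CnrAnchor r (if c = 0 then 1 else if c < r then 3*c+1 else 3*r+2*(c-r)+1)
        unfold CnrAnchor; split_ifs <;> omega
      have hf0 : (f:ℕ) ≠ 0 := by
        show (if c = 0 then 1 else if c < r then 3*c+1 else 3*r+2*(c-r)+1) ≠ 0
        split_ifs <;> omega
      have hins : IsIndep (Cnr n r) (insert f s) := by
        intro u hu w hw hadj
        have hadj' := adj_iff.mp hadj
        rcases Finset.mem_insert.mp hu with hu' | hu' <;>
          rcases Finset.mem_insert.mp hw with hw' | hw'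
        · exact hadj'.1 (hu'.trans hw'.symm)
        · subst hu'
          rcases hadj'.2 with h | ⟨h0,ha⟩ | ⟨h0,ha⟩
          · exact hno w hw' (by omega)
          · exact hf0 h0
          · exact hfa ha
        · subst hw'
          rcases hadj'.2 with h | ⟨h0,ha⟩ | ⟨h0,ha⟩
          · exact hno u hu' (by omega)
          · exact hfa ha
          · exact hf0 h0
        · exact hind u hu' w hw' hadj
      have heq := hmax (insert f s) hins (Finset.subset_insert f s)
      have hfs : f ∈ s := by rw [heq]; exact Finset.mem_insert_self f s
      exact hno f hfs hfl
    refine ⟨?_, ?_⟩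
    · intro c hc
      have hex : ∃ v, v ∈ s ∧ CnrLabel r (v:ℕ) = c := by
        by_contra hcon
        push_neg at hcon
        exact hnot c hc hcon
      obtain ⟨v, hv, hvl⟩ := hex
      refine ⟨v, ⟨hv, hvl⟩, ?_⟩
      rintro w ⟨hw, hwl⟩
      by_contra hne
      exact hind w hw v hv (adj_iff.mpr ⟨hne, Or.inl (by omega)⟩)
    · intro v hv h0 w hw ha
      by_cases hvw : v = w
      · subst hvw; exact anchor_low hr (by omega) ha
      · exact hind v hv w hw (adj_iff.mpr ⟨hvw, Or.inr (Or.inl ⟨h0, ha⟩)⟩)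
  · rintro ⟨huniq, hanch⟩
    have hind : IsIndep (Cnr n r) s := by
      intro u hu w hw hadj
      obtain ⟨hne, hor⟩ := adj_iff.mp hadj
      rcases hor with h | ⟨h0,ha⟩ | ⟨h0,ha⟩
      · have hcu : CnrLabel r (u:ℕ) < r+k := label_lt hr (by have := u.2; omega)
        obtain ⟨x, -, hx⟩ := huniq _ hcu
        exact hne ((hx u ⟨hu, rfl⟩).trans (hx w ⟨hw, h.symm⟩).symm)
      · exact hanch u hu h0 w hw ha
      · exact hanch w hw h0 u hu ha
    refine ⟨hind, fun t hti hst => Finset.Subset.antisymm hst (fun v hv => ?_)⟩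
    have hc : CnrLabel r (v:ℕ) < r+k := label_lt hr (by have := v.2; omega)
    obtain ⟨x, ⟨hxs, hxl⟩, -⟩ := huniq _ hc
    by_cases hvx : v = x
    · exact hvx ▸ hxs
    · exact absurd (adj_iff.mpr ⟨hvx, Or.inl hxl.symm⟩) (hti v hv x (hst hxs))

lemma good_of {n r k : ℕ} {s : Finset (Fin n)}
    (hex : ∀ c, c < r+k → ∃ v, v ∈ s ∧ CnrLabel r (v:ℕ) = c)
    (huni : ∀ v ∈ s, ∀ w ∈ s, CnrLabel r (v:ℕ) = CnrLabel r (w:ℕ) → v = w)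
    (hanch : ∀ v ∈ s, (v:ℕ) = 0 → ∀ w ∈ s, ¬ CnrAnchor r (w:ℕ)) : Good n r k s := by
  refine ⟨fun c hc => ?_, hanch⟩
  obtain ⟨v, hv, hvl⟩ := hex c hc
  exact ⟨v, ⟨hv, hvl⟩, fun w hw => huni w hw.1 v hv (hw.2.trans hvl.symm)⟩

lemma exists_mem_label {n r : ℕ} {s : Finset (Fin n)} {c : ℕ} (v : ℕ) (hvn : v < n)
    (hmem : (⟨v,hvn⟩ : Fin n) ∈ s) (hlab : CnrLabel r v = c) :
    ∃ w, w ∈ s ∧ CnrLabel r (w:ℕ) = c := ⟨⟨v,hvn⟩, hmem, hlab⟩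

def F0 (n r k : ℕ) (g : Fin (r-1) → Fin 2) : Finset (Fin n) :=
  Finset.univ.filter (fun v => (v:ℕ) = 0 ∨
    (∃ i : Fin (r-1), (v:ℕ) = 3*(1+(i:ℕ))+1+((g i):ℕ)) ∨
    (∃ j : Fin k, (v:ℕ) = 3*r+2*(j:ℕ)+1))

def F1 (n r k : ℕ) (p : Fin 2 × (Fin (r-1) → Fin 3) × (Fin k → Fin 2)) : Finset (Fin n) :=
  Finset.univ.filter (fun v => (v:ℕ) = 1+((p.1):ℕ) ∨
    (∃ i : Fin (r-1), (v:ℕ) = 3*(1+(i:ℕ))+((p.2.1 i):ℕ)) ∨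
    (∃ j : Fin k, (v:ℕ) = 3*r+2*(j:ℕ)+((p.2.2 j):ℕ)))

lemma mem_F0 {n r k : ℕ} {g : Fin (r-1) → Fin 2} {v : Fin n} :
    v ∈ F0 n r k g ↔ ((v:ℕ) = 0 ∨
      (∃ i : Fin (r-1), (v:ℕ) = 3*(1+(i:ℕ))+1+((g i):ℕ)) ∨
      (∃ j : Fin k, (v:ℕ) = 3*r+2*(j:ℕ)+1)) := by
  unfold F0; rw [Finset.mem_filter]; simp only [Finset.mem_univ, true_and]

lemma mem_F1 {n r k : ℕ} {p : Fin 2 × (Fin (r-1) → Fin 3) × (Fin k → Fin 2)} {v : Fin n} :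
    v ∈ F1 n r k p ↔ ((v:ℕ) = 1+((p.1):ℕ) ∨
      (∃ i : Fin (r-1), (v:ℕ) = 3*(1+(i:ℕ))+((p.2.1 i):ℕ)) ∨
      (∃ j : Fin k, (v:ℕ) = 3*r+2*(j:ℕ)+((p.2.2 j):ℕ))) := by
  unfold F1; rw [Finset.mem_filter]; simp only [Finset.mem_univ, true_and]

lemma F0_shape {n r k : ℕ} {g : Fin (r-1) → Fin 2} (hr : 1 ≤ r) {v : Fin n}
    (hv : v ∈ F0 n r k g) :
    ((v:ℕ) = 0 ∧ CnrLabel r (v:ℕ) = 0) ∨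
    (∃ i : Fin (r-1), (v:ℕ) = 3*(1+(i:ℕ))+1+((g i):ℕ) ∧ CnrLabel r (v:ℕ) = 1+(i:ℕ)) ∨
    (∃ j : Fin k, (v:ℕ) = 3*r+2*(j:ℕ)+1 ∧ CnrLabel r (v:ℕ) = r+(j:ℕ)) := by
  rcases mem_F0.mp hv with h | ⟨i,hi⟩ | ⟨j,hj⟩
  · exact Or.inl ⟨h, by rw [h]; exact label_low' (by omega)⟩
  · exact Or.inr (Or.inl ⟨i, hi, label_mid' (by omega) (by have := (g i).2; omega)
      (by omega) (by have := i.2; omega)⟩)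
  · exact Or.inr (Or.inr ⟨j, hj, label_hi' hr (by omega) (by omega) (by omega)⟩)

lemma F1_shape {n r k : ℕ} {p : Fin 2 × (Fin (r-1) → Fin 3) × (Fin k → Fin 2)} (hr : 1 ≤ r)
    {v : Fin n} (hv : v ∈ F1 n r k p) :
    ((v:ℕ) = 1+((p.1):ℕ) ∧ CnrLabel r (v:ℕ) = 0) ∨
    (∃ i : Fin (r-1), (v:ℕ) = 3*(1+(i:ℕ))+((p.2.1 i):ℕ) ∧ CnrLabel r (v:ℕ) = 1+(i:ℕ)) ∨
    (∃ j : Fin k, (v:ℕ) = 3*r+2*(j:ℕ)+((p.2.2 j):ℕ) ∧ CnrLabel r (v:ℕ) = r+(j:ℕ)) := by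
  rcases mem_F1.mp hv with h | ⟨i,hi⟩ | ⟨j,hj⟩
  · exact Or.inl ⟨h, by rw [h]; exact label_low' (by have := (p.1).2; omega)⟩
  · exact Or.inr (Or.inl ⟨i, hi, label_mid' (by omega) (by have := (p.2.1 i).2; omega)
      (by omega) (by have := i.2; omega)⟩)
  · exact Or.inr (Or.inr ⟨j, hj, label_hi' hr (by omega) (by omega)
      (by have := (p.2.2 j).2; omega)⟩)

lemma good_F0 {n r k : ℕ} (hr : 1 ≤ r) (hn : n = 3*r+2*k) (g : Fin (r-1) → Fin 2) :
    Good n r k (F0 n r k g) := by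
  apply good_of
  · intro c hc
    rcases (show c = 0 ∨ (1 ≤ c ∧ c < r) ∨ (r ≤ c ∧ c < r+k) by omega) with
      hc0 | ⟨h1,h2⟩ | ⟨h1,h2⟩
    · subst hc0
      exact exists_mem_label 0 (by omega) (mem_F0.mpr (Or.inl rfl)) (label_low' (by omega))
    · have hcp : c - 1 < r - 1 := by omega
      exact exists_mem_label (3*(1+(c-1))+1+((g ⟨c-1,hcp⟩):ℕ))
        (by have := (g ⟨c-1,hcp⟩).2; omega)
        (mem_F0.mpr (Or.inr (Or.inl ⟨⟨c-1,hcp⟩, rfl⟩)))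
        (label_mid' (by omega) (by have := (g ⟨c-1,hcp⟩).2; omega) (by omega) (by omega))
    · have hcp : c - r < k := by omega
      exact exists_mem_label (3*r+2*(c-r)+1) (by omega)
        (mem_F0.mpr (Or.inr (Or.inr ⟨⟨c-r,hcp⟩, rfl⟩)))
        (label_hi' hr (by omega) (by omega) (by omega))
  · intro v hv w hw hl
    rcases F0_shape hr hv with ⟨h1,h2⟩|⟨i,h1,h2⟩|⟨j,h1,h2⟩ <;>
      rcases F0_shape hr hw with ⟨h1',h2'⟩|⟨i',h1',h2'⟩|⟨j',h1',h2'⟩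
    · exact Fin.ext (by omega)
    · exfalso; omega
    · exfalso; omega
    · exfalso; omega
    · have hii : i = i' := Fin.ext (by omega)
      subst hii; exact Fin.ext (by omega)
    · exfalso; have := i.2; omega
    · exfalso; omega
    · exfalso; have := i'.2; omega
    · have hjj : j = j' := Fin.ext (by omega)
      subst hjj; exact Fin.ext (by omega)
  · intro v hv h0 w hw ha
    rcases F0_shape hr hw with ⟨h1,h2⟩|⟨i,h1,h2⟩|⟨j,h1,h2⟩
    · exact anchor_low hr (by omega) ha
    · have := i.2; have := (g i).2; unfold CnrAnchor at ha; omega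
    · unfold CnrAnchor at ha; omega

lemma good_F1 {n r k : ℕ} (hr : 1 ≤ r) (hn : n = 3*r+2*k)
    (p : Fin 2 × (Fin (r-1) → Fin 3) × (Fin k → Fin 2)) :
    Good n r k (F1 n r k p) := by
  apply good_of
  · intro c hc
    rcases (show c = 0 ∨ (1 ≤ c ∧ c < r) ∨ (r ≤ c ∧ c < r+k) by omega) with
      hc0 | ⟨h1,h2⟩ | ⟨h1,h2⟩
    · subst hc0
      exact exists_mem_label (1+((p.1):ℕ)) (by have := (p.1).2; omega)
        (mem_F1.mpr (Or.inl rfl)) (label_low' (by have := (p.1).2; omega))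
    · have hcp : c - 1 < r - 1 := by omega
      exact exists_mem_label (3*(1+(c-1))+((p.2.1 ⟨c-1,hcp⟩):ℕ))
        (by have := (p.2.1 ⟨c-1,hcp⟩).2; omega)
        (mem_F1.mpr (Or.inr (Or.inl ⟨⟨c-1,hcp⟩, rfl⟩)))
        (label_mid' (by omega) (by have := (p.2.1 ⟨c-1,hcp⟩).2; omega) (by omega) (by omega))
    · have hcp : c - r < k := by omega
      exact exists_mem_label (3*r+2*(c-r)+((p.2.2 ⟨c-r,hcp⟩):ℕ))
        (by have := (p.2.2 ⟨c-r,hcp⟩).2; omega)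
        (mem_F1.mpr (Or.inr (Or.inr ⟨⟨c-r,hcp⟩, rfl⟩)))
        (label_hi' hr (by omega) (by omega) (by have := (p.2.2 ⟨c-r,hcp⟩).2; omega))
  · intro v hv w hw hl
    rcases F1_shape hr hv with ⟨h1,h2⟩|⟨i,h1,h2⟩|⟨j,h1,h2⟩ <;>
      rcases F1_shape hr hw with ⟨h1',h2'⟩|⟨i',h1',h2'⟩|⟨j',h1',h2'⟩
    · exact Fin.ext (by omega)
    · exfalso; omega
    · exfalso; omega
    · exfalso; omega
    · have hii : i = i' := Fin.ext (by omega)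
      subst hii; exact Fin.ext (by omega)
    · exfalso; have := i.2; omega
    · exfalso; omega
    · exfalso; have := i'.2; omega
    · have hjj : j = j' := Fin.ext (by omega)
      subst hjj; exact Fin.ext (by omega)
  · intro v hv h0 w hw ha
    exfalso
    rcases F1_shape hr hv with ⟨h1,h2⟩|⟨i,h1,h2⟩|⟨j,h1,h2⟩
    · omega
    · omega
    · omega

lemma inj_F0 {n r k : ℕ} (hr : 1 ≤ r) (hn : n = 3*r+2*k) :
    Function.Injective (F0 n r k) := by
  intro g g' h
  funext i
  have hin : (⟨3*(1+(i:ℕ))+1+((g i):ℕ), by have := i.2; have := (g i).2; omega⟩ : Fin n)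
      ∈ F0 n r k g' := by
    rw [← h]; exact mem_F0.mpr (Or.inr (Or.inl ⟨i, rfl⟩))
  rcases mem_F0.mp hin with h0 | ⟨i', hi'⟩ | ⟨j', hj'⟩
  · exfalso
    have h0' : 3*(1+(i:ℕ))+1+((g i):ℕ) = 0 := h0
    omega
  · have hi'' : 3*(1+(i:ℕ))+1+((g i):ℕ) = 3*(1+(i':ℕ))+1+((g' i'):ℕ) := hi'
    have hii : i = i' := Fin.ext (by have := (g i).2; have := (g' i').2; omega)
    subst hii
    exact Fin.ext (by omega)
  · exfalso
    have hj'' : 3*(1+(i:ℕ))+1+((g i):ℕ) = 3*r+2*(j':ℕ)+1 := hj'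
    have := i.2; have := (g i).2; omega

lemma inj_F1 {n r k : ℕ} (hr : 1 ≤ r) (hn : n = 3*r+2*k) :
    Function.Injective (F1 n r k) := by
  rintro ⟨a, g, hh⟩ ⟨a', g', hh'⟩ h
  simp only [Prod.mk.injEq]
  refine ⟨?_, ?_, ?_⟩
  · have hin : (⟨1+(a:ℕ), by have := a.2; omega⟩ : Fin n) ∈ F1 n r k (a', g', hh') := by
      rw [← h]; exact mem_F1.mpr (Or.inl rfl)
    rcases mem_F1.mp hin with h0 | ⟨i', hi'⟩ | ⟨j', hj'⟩
    · have h0' : 1+(a:ℕ) = 1+(a':ℕ) := h0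
      exact Fin.ext (by omega)
    · exfalso
      have hi'' : 1+(a:ℕ) = 3*(1+(i':ℕ))+((g' i'):ℕ) := hi'
      have := a.2; omega
    · exfalso
      have hj'' : 1+(a:ℕ) = 3*r+2*(j':ℕ)+((hh' j'):ℕ) := hj'
      have := a.2; omega
  · funext i
    have hin : (⟨3*(1+(i:ℕ))+((g i):ℕ), by have := i.2; have := (g i).2; omega⟩ : Fin n)
        ∈ F1 n r k (a', g', hh') := by
      rw [← h]; exact mem_F1.mpr (Or.inr (Or.inl ⟨i, rfl⟩))
    rcases mem_F1.mp hin with h0 | ⟨i', hi'⟩ | ⟨j', hj'⟩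
    · exfalso
      have h0' : 3*(1+(i:ℕ))+((g i):ℕ) = 1+(a':ℕ) := h0
      have := a'.2; omega
    · have hi'' : 3*(1+(i:ℕ))+((g i):ℕ) = 3*(1+(i':ℕ))+((g' i'):ℕ) := hi'
      have hii : i = i' := Fin.ext (by have := (g i).2; have := (g' i').2; omega)
      subst hii
      exact Fin.ext (by omega)
    · exfalso
      have hj'' : 3*(1+(i:ℕ))+((g i):ℕ) = 3*r+2*(j':ℕ)+((hh' j'):ℕ) := hj'
      have := i.2; have := (g i).2; omega
  · funext j
    have hin : (⟨3*r+2*(j:ℕ)+((hh j):ℕ), by have := j.2; have := (hh j).2; omega⟩ : Fin n)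
        ∈ F1 n r k (a', g', hh') := by
      rw [← h]; exact mem_F1.mpr (Or.inr (Or.inr ⟨j, rfl⟩))
    rcases mem_F1.mp hin with h0 | ⟨i', hi'⟩ | ⟨j', hj'⟩
    · exfalso
      have h0' : 3*r+2*(j:ℕ)+((hh j):ℕ) = 1+(a':ℕ) := h0
      have := a'.2; omega
    · exfalso
      have hi'' : 3*r+2*(j:ℕ)+((hh j):ℕ) = 3*(1+(i':ℕ))+((g' i'):ℕ) := hi'
      have := i'.2; have := (g' i').2; omega
    · have hj'' : 3*r+2*(j:ℕ)+((hh j):ℕ) = 3*r+2*(j':ℕ)+((hh' j'):ℕ) := hj'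
      have hjj : j = j' := Fin.ext (by have := (hh j).2; have := (hh' j').2; omega)
      subst hjj
      exact Fin.ext (by omega)

lemma F0_ne_F1 {n r k : ℕ} (hr : 1 ≤ r) (hn : n = 3*r+2*k) (g : Fin (r-1) → Fin 2)
    (p : Fin 2 × (Fin (r-1) → Fin 3) × (Fin k → Fin 2)) : F0 n r k g ≠ F1 n r k p := by
  intro h
  have h0 : (⟨0, by omega⟩ : Fin n) ∈ F0 n r k g := mem_F0.mpr (Or.inl rfl)
  rw [h] at h0
  rcases mem_F1.mp h0 with h1 | ⟨i, hi⟩ | ⟨j, hj⟩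
  · have : (0:ℕ) = 1+((p.1):ℕ) := h1
    omega
  · have : (0:ℕ) = 3*(1+(i:ℕ))+((p.2.1 i):ℕ) := hi
    omega
  · have : (0:ℕ) = 3*r+2*(j:ℕ)+((p.2.2 j):ℕ) := hj
    omega

lemma surj_F {n r k : ℕ} (hr : 1 ≤ r) (hn : n = 3*r+2*k) {s : Finset (Fin n)}
    (hs : Good n r k s) :
    (∃ g, s = F0 n r k g) ∨ (∃ p, s = F1 n r k p) := by
  obtain ⟨huniq, hanch⟩ := hs
  have hsame : ∀ v ∈ s, ∀ w ∈ s, CnrLabel r (v:ℕ) = CnrLabel r (w:ℕ) → v = w := by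
    intro v hv w hw hl
    have hcu : CnrLabel r (v:ℕ) < r+k := label_lt hr (by have := v.2; omega)
    obtain ⟨x, -, hx⟩ := huniq _ hcu
    exact (hx v ⟨hv, rfl⟩).trans (hx w ⟨hw, hl.symm⟩).symm
  have hrep : ∀ c, c < r+k → ∃ v, v ∈ s ∧ CnrLabel r (v:ℕ) = c := by
    intro c hc
    obtain ⟨v, hv, -⟩ := huniq c hc
    exact ⟨v, hv⟩
  obtain ⟨z, hz, hzl⟩ := hrep 0 (by omega)
  have hz3 : (z:ℕ) < 3 := by
    rcases label_cases (k := k) hr (show (z:ℕ) < 3*r+2*k by have := z.2; omega) with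
      ⟨h,_⟩|⟨i,o,hi,ho,hvo,hl⟩|⟨j,o,hj,ho,hvo,hl⟩ <;> omega
  by_cases hz0 : (z:ℕ) = 0
  · -- the set contains vertex 0
    left
    have hnoanch : ∀ w ∈ s, ¬ CnrAnchor r (w:ℕ) := hanch z hz hz0
    refine ⟨fun i => if (∃ u ∈ s, (u:ℕ) = 3*(1+(i:ℕ))+2) then (1:Fin 2) else 0, ?_⟩
    ext v
    rw [mem_F0]
    constructor
    · intro hv
      rcases label_cases (k := k) hr (show (v:ℕ) < 3*r+2*k by have := v.2; omega) with
        ⟨h3,hl⟩|⟨i,o,hi,ho,hvo,hl⟩|⟨j,o,hj,ho,hvo,hl⟩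
      · left
        have hvz : v = z := hsame v hv z hz (by omega)
        rw [hvz]; exact hz0
      · right; left
        have honz : o ≠ 0 := by
          intro h0
          exact hnoanch v hv (by unfold CnrAnchor; omega)
        refine ⟨⟨i, hi⟩, ?_⟩
        show (v:ℕ) = 3*(1+i)+1+(Fin.val (if (∃ u ∈ s, (u:ℕ) = 3*(1+i)+2) then (1:Fin 2) else 0))
        by_cases hcond : ∃ u ∈ s, (u:ℕ) = 3*(1+i)+2
        · rw [if_pos hcond]
          have e1 : ((1:Fin 2):ℕ) = 1 := rfl
          obtain ⟨u, hu, hu2⟩ := hcond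
          have hul : CnrLabel r (u:ℕ) = 1+i := by
            rw [hu2]; exact label_mid' (by omega) (by omega) (by omega) (by omega)
          have huv : u = v := hsame u hu v hv (by omega)
          have huv' : (u:ℕ) = (v:ℕ) := by rw [huv]
          omega
        · rw [if_neg hcond]
          have e0 : ((0:Fin 2):ℕ) = 0 := rfl
          have ho2 : o ≠ 2 := fun h2 => hcond ⟨v, hv, by omega⟩
          omega
      · right; right
        have honz : o ≠ 0 := by
          intro h0
          exact hnoanch v hv (by unfold CnrAnchor; omega)
        exact ⟨⟨j, hj⟩, by show (v:ℕ) = 3*r+2*j+1; omega⟩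
    · rintro (h0 | ⟨i, hi⟩ | ⟨j, hj⟩)
      · have hvz : v = z := Fin.ext (by omega)
        rw [hvz]; exact hz
      · have hi' : (v:ℕ) = 3*(1+(i:ℕ))+1+
            (Fin.val (if (∃ u ∈ s, (u:ℕ) = 3*(1+(i:ℕ))+2) then (1:Fin 2) else 0)) := hi
        obtain ⟨w, hw, hwl⟩ := hrep (1+(i:ℕ)) (by have := i.2; omega)
        rcases label_cases (k := k) hr (show (w:ℕ) < 3*r+2*k by have := w.2; omega) with
          ⟨h3,hl⟩|⟨i',o,hio,ho,hvo,hl⟩|⟨j',o,hjo,ho,hvo,hl⟩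
        · exfalso; omega
        · have hii : i' = (i:ℕ) := by omega
          have honz : o ≠ 0 := by
            intro h0
            exact hnoanch w hw (by unfold CnrAnchor; omega)
          have hwv : (w:ℕ) = (v:ℕ) := by
            by_cases hcond : ∃ u ∈ s, (u:ℕ) = 3*(1+(i:ℕ))+2
            · rw [if_pos hcond] at hi'
              have e1 : ((1:Fin 2):ℕ) = 1 := rfl
              obtain ⟨u, hu, hu2⟩ := hcond
              have hul : CnrLabel r (u:ℕ) = 1+(i:ℕ) := by
                rw [hu2]
                exact label_mid' (by omega) (by omega) (by omega) (by have := i.2; omega)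
              have huw : u = w := hsame u hu w hw (by omega)
              have huw' : (u:ℕ) = (w:ℕ) := by rw [huw]
              omega
            · rw [if_neg hcond] at hi'
              have e0 : ((0:Fin 2):ℕ) = 0 := rfl
              have ho2 : o ≠ 2 := fun h2 => hcond ⟨w, hw, by omega⟩
              omega
          have hwv' : w = v := Fin.ext hwv
          rw [← hwv']; exact hw
        · exfalso; have := i.2; omega
      · have hj' : (v:ℕ) = 3*r+2*(j:ℕ)+1 := hj
        obtain ⟨w, hw, hwl⟩ := hrep (r+(j:ℕ)) (by have := j.2; omega)
        rcases label_cases (k := k) hr (show (w:ℕ) < 3*r+2*k by have := w.2; omega) with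
          ⟨h3,hl⟩|⟨i',o,hio,ho,hvo,hl⟩|⟨j',o,hjo,ho,hvo,hl⟩
        · exfalso; omega
        · exfalso; omega
        · have hjj : j' = (j:ℕ) := by omega
          have honz : o ≠ 0 := by
            intro h0
            exact hnoanch w hw (by unfold CnrAnchor; omega)
          have hwv : w = v := Fin.ext (by omega)
          rw [← hwv]; exact hw
  · -- the set does not contain vertex 0
    right
    refine ⟨(⟨(z:ℕ)-1, by omega⟩,
      fun i => if (∃ u ∈ s, (u:ℕ) = 3*(1+(i:ℕ))+1) then (1:Fin 3)
        else if (∃ u ∈ s, (u:ℕ) = 3*(1+(i:ℕ))+2) then 2 else 0,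
      fun j => if (∃ u ∈ s, (u:ℕ) = 3*r+2*(j:ℕ)+1) then (1:Fin 2) else 0), ?_⟩
    ext v
    rw [mem_F1]
    constructor
    · intro hv
      rcases label_cases (k := k) hr (show (v:ℕ) < 3*r+2*k by have := v.2; omega) with
        ⟨h3,hl⟩|⟨i,o,hi,ho,hvo,hl⟩|⟨j,o,hj,ho,hvo,hl⟩
      · left
        have hvz : v = z := hsame v hv z hz (by omega)
        have hvz' : (v:ℕ) = (z:ℕ) := by rw [hvz]
        show (v:ℕ) = 1+((z:ℕ)-1)
        omega
      · right; left
        refine ⟨⟨i, hi⟩, ?_⟩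
        show (v:ℕ) = 3*(1+i)+(Fin.val (if (∃ u ∈ s, (u:ℕ) = 3*(1+i)+1) then (1:Fin 3)
          else if (∃ u ∈ s, (u:ℕ) = 3*(1+i)+2) then 2 else 0))
        by_cases hc1 : ∃ u ∈ s, (u:ℕ) = 3*(1+i)+1
        · rw [if_pos hc1]
          have e1 : ((1:Fin 3):ℕ) = 1 := rfl
          obtain ⟨u, hu, hu1⟩ := hc1
          have hul : CnrLabel r (u:ℕ) = 1+i := by
            rw [hu1]; exact label_mid' (by omega) (by omega) (by omega) (by omega)
          have huv : u = v := hsame u hu v hv (by omega)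
          have huv' : (u:ℕ) = (v:ℕ) := by rw [huv]
          omega
        · rw [if_neg hc1]
          by_cases hc2 : ∃ u ∈ s, (u:ℕ) = 3*(1+i)+2
          · rw [if_pos hc2]
            have e2 : ((2:Fin 3):ℕ) = 2 := rfl
            obtain ⟨u, hu, hu2⟩ := hc2
            have hul : CnrLabel r (u:ℕ) = 1+i := by
              rw [hu2]; exact label_mid' (by omega) (by omega) (by omega) (by omega)
            have huv : u = v := hsame u hu v hv (by omega)
            have huv' : (u:ℕ) = (v:ℕ) := by rw [huv]
            omega
          · rw [if_neg hc2]
            have e0 : ((0:Fin 3):ℕ) = 0 := rfl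
            have ho1 : o ≠ 1 := fun h => hc1 ⟨v, hv, by omega⟩
            have ho2 : o ≠ 2 := fun h => hc2 ⟨v, hv, by omega⟩
            omega
      · right; right
        refine ⟨⟨j, hj⟩, ?_⟩
        show (v:ℕ) = 3*r+2*j+(Fin.val (if (∃ u ∈ s, (u:ℕ) = 3*r+2*j+1) then (1:Fin 2) else 0))
        by_cases hc1 : ∃ u ∈ s, (u:ℕ) = 3*r+2*j+1
        · rw [if_pos hc1]
          have e1 : ((1:Fin 2):ℕ) = 1 := rfl
          obtain ⟨u, hu, hu1⟩ := hc1
          have hul : CnrLabel r (u:ℕ) = r+j := by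
            rw [hu1]; exact label_hi' hr (by omega) (by omega) (by omega)
          have huv : u = v := hsame u hu v hv (by omega)
          have huv' : (u:ℕ) = (v:ℕ) := by rw [huv]
          omega
        · rw [if_neg hc1]
          have e0 : ((0:Fin 2):ℕ) = 0 := rfl
          have ho1 : o ≠ 1 := fun h => hc1 ⟨v, hv, by omega⟩
          omega
    · rintro (h0 | ⟨i, hi⟩ | ⟨j, hj⟩)
      · have h0' : (v:ℕ) = 1+((z:ℕ)-1) := h0
        have hvz : v = z := Fin.ext (by omega)
        rw [hvz]; exact hz
      · have hi' : (v:ℕ) = 3*(1+(i:ℕ))+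
            (Fin.val (if (∃ u ∈ s, (u:ℕ) = 3*(1+(i:ℕ))+1) then (1:Fin 3)
              else if (∃ u ∈ s, (u:ℕ) = 3*(1+(i:ℕ))+2) then 2 else 0)) := hi
        obtain ⟨w, hw, hwl⟩ := hrep (1+(i:ℕ)) (by have := i.2; omega)
        rcases label_cases (k := k) hr (show (w:ℕ) < 3*r+2*k by have := w.2; omega) with
          ⟨h3,hl⟩|⟨i',o,hio,ho,hvo,hl⟩|⟨j',o,hjo,ho,hvo,hl⟩
        · exfalso; omega
        · have hii : i' = (i:ℕ) := by omega
          have hwv : (w:ℕ) = (v:ℕ) := by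
            by_cases hc1 : ∃ u ∈ s, (u:ℕ) = 3*(1+(i:ℕ))+1
            · rw [if_pos hc1] at hi'
              have e1 : ((1:Fin 3):ℕ) = 1 := rfl
              obtain ⟨u, hu, hu1⟩ := hc1
              have hul : CnrLabel r (u:ℕ) = 1+(i:ℕ) := by
                rw [hu1]
                exact label_mid' (by omega) (by omega) (by omega) (by have := i.2; omega)
              have huw : u = w := hsame u hu w hw (by omega)
              have huw' : (u:ℕ) = (w:ℕ) := by rw [huw]
              omega
            · rw [if_neg hc1] at hi'
              by_cases hc2 : ∃ u ∈ s, (u:ℕ) = 3*(1+(i:ℕ))+2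
              · rw [if_pos hc2] at hi'
                have e2 : ((2:Fin 3):ℕ) = 2 := rfl
                obtain ⟨u, hu, hu2⟩ := hc2
                have hul : CnrLabel r (u:ℕ) = 1+(i:ℕ) := by
                  rw [hu2]
                  exact label_mid' (by omega) (by omega) (by omega) (by have := i.2; omega)
                have huw : u = w := hsame u hu w hw (by omega)
                have huw' : (u:ℕ) = (w:ℕ) := by rw [huw]
                omega
              · rw [if_neg hc2] at hi'
                have e0 : ((0:Fin 3):ℕ) = 0 := rfl
                have ho1 : o ≠ 1 := fun h => hc1 ⟨w, hw, by omega⟩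
                have ho2 : o ≠ 2 := fun h => hc2 ⟨w, hw, by omega⟩
                omega
          have hwv' : w = v := Fin.ext hwv
          rw [← hwv']; exact hw
        · exfalso; have := i.2; omega
      · have hj' : (v:ℕ) = 3*r+2*(j:ℕ)+
            (Fin.val (if (∃ u ∈ s, (u:ℕ) = 3*r+2*(j:ℕ)+1) then (1:Fin 2) else 0)) := hj
        obtain ⟨w, hw, hwl⟩ := hrep (r+(j:ℕ)) (by have := j.2; omega)
        rcases label_cases (k := k) hr (show (w:ℕ) < 3*r+2*k by have := w.2; omega) with
          ⟨h3,hl⟩|⟨i',o,hio,ho,hvo,hl⟩|⟨j',o,hjo,ho,hvo,hl⟩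
        · exfalso; omega
        · exfalso; have := hio; omega
        · have hjj : j' = (j:ℕ) := by omega
          have hwv : (w:ℕ) = (v:ℕ) := by
            by_cases hc1 : ∃ u ∈ s, (u:ℕ) = 3*r+2*(j:ℕ)+1
            · rw [if_pos hc1] at hj'
              have e1 : ((1:Fin 2):ℕ) = 1 := rfl
              obtain ⟨u, hu, hu1⟩ := hc1
              have hul : CnrLabel r (u:ℕ) = r+(j:ℕ) := by
                rw [hu1]; exact label_hi' hr (by omega) (by omega) (by omega)
              have huw : u = w := hsame u hu w hw (by omega)
              have huw' : (u:ℕ) = (w:ℕ) := by rw [huw]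
              omega
            · rw [if_neg hc1] at hj'
              have e0 : ((0:Fin 2):ℕ) = 0 := rfl
              have ho1 : o ≠ 1 := fun h => hc1 ⟨w, hw, by omega⟩
              omega
          have hwv' : w = v := Fin.ext hwv
          rw [← hwv']; exact hw


/-- `C(n,r)` has exactly `3^{r-1}·2^{(n-3r+2)/2} + 2^{r-1}` maximal
independent sets. -/
theorem stmt14 (n r : ℕ) (hr : 1 ≤ r) (hn : 3 * r ≤ n) (hpar : n % 2 = r % 2) :
    numMaxlIndep (Cnr n r) =
      3 ^ (r - 1) * 2 ^ ((n - 3 * r + 2) / 2) + 2 ^ (r - 1) := by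
  set k := (n - 3*r)/2 with hk
  have hn2 : n = 3*r + 2*k := by omega
  have hset : {s : Finset (Fin n) | IsMaxlIndep (Cnr n r) s} =
      ↑(Finset.image (F0 n r k) Finset.univ ∪ Finset.image (F1 n r k) Finset.univ) := by
    ext s
    simp only [Set.mem_setOf_eq, Finset.coe_union, Set.mem_union, Finset.mem_coe,
      Finset.mem_image, Finset.mem_univ, true_and]
    constructor
    · intro hs
      rcases surj_F hr hn2 ((maxl_iff_good hr hn2 s).mp hs) with ⟨g, rfl⟩ | ⟨p, rfl⟩
      · exact Or.inl ⟨g, rfl⟩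
      · exact Or.inr ⟨p, rfl⟩
    · rintro (⟨g, rfl⟩ | ⟨p, rfl⟩)
      · exact (maxl_iff_good hr hn2 _).mpr (good_F0 hr hn2 g)
      · exact (maxl_iff_good hr hn2 _).mpr (good_F1 hr hn2 p)
  have hdisj : Disjoint (Finset.image (F0 n r k) Finset.univ)
      (Finset.image (F1 n r k) Finset.univ) := by
    rw [Finset.disjoint_left]
    intro s hs0 hs1
    simp only [Finset.mem_image, Finset.mem_univ, true_and] at hs0 hs1
    obtain ⟨g, rfl⟩ := hs0
    obtain ⟨p, hp⟩ := hs1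
    exact F0_ne_F1 hr hn2 g p hp.symm
  rw [numMaxlIndep, hset, Set.ncard_coe_finset,
    Finset.card_union_of_disjoint hdisj,
    Finset.card_image_of_injective _ (inj_F0 hr hn2),
    Finset.card_image_of_injective _ (inj_F1 hr hn2),
    Finset.card_univ, Finset.card_univ]
  simp only [Fintype.card_fun, Fintype.card_prod, Fintype.card_fin]
  have hkk : (n - 3*r + 2)/2 = k + 1 := by omega
  rw [hkk, pow_succ]
  ring
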